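/- Let n ≥ 2, α ∈ (-n, 0), φ(t) = t^{n/|α|}, and Ω ⊆ ℝⁿ an unbounded globally n-regular domain with constant θ ∈ (0,1). Then for every nonzero u ∈ C_c^1(Ω), the Orlicz-Besov seminorm ‖u‖_{Ḃ^{α,φ}(Ω)} is infinite; i.e., for every λ > 0, ∫_Ω ∫_Ω φ(|u(x)-u(y)|/(λ|x-y|^α)) dx dy/|x-y|^{2n} = ∞. -/

import Mathlib

open MeasureTheory Set Filter
open scoped ENNReal NNReal Topology

noncomputable def Lunder (n : ℕ) (α : ℝ) (φ : ℝ → ℝ) : ℝ≥0∞ :=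
  ⨆ x ∈ Set.Ioi (0:ℝ), ∫⁻ t in Set.Ioo (0:ℝ) 1,
    ENNReal.ofReal (φ (t ^ (1 - α) * x) / (φ x * t ^ (n + 1)))

noncomputable def Lover (n : ℕ) (α : ℝ) (φ : ℝ → ℝ) : ℝ≥0∞ :=
  ⨆ x ∈ Set.Ioi (0:ℝ), ∫⁻ t in Set.Ioi (1:ℝ),
    ENNReal.ofReal (φ (t ^ (-α) * x) / (φ x * t ^ (n + 1)))

noncomputable def besovSet (n : ℕ) (α : ℝ) (φ : ℝ → ℝ)
    (Ω : Set (EuclideanSpace ℝ (Fin n))) (u : EuclideanSpace ℝ (Fin n) → ℝ) : Set ℝ :=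
  {l : ℝ | 0 < l ∧
    (∫⁻ x in Ω, ∫⁻ y in Ω,
      ENNReal.ofReal (φ (|u x - u y| / (l * ‖x - y‖ ^ α)) / ‖x - y‖ ^ (2 * n))) ≤ 1}

theorem stmt11 (n : ℕ) (hn : 2 ≤ n) (α : ℝ) (hα1 : -(n : ℝ) < α) (hα2 : α < 0)
    (Ω : Set (EuclideanSpace ℝ (Fin n))) (hopen : IsOpen Ω) (hconn : IsConnected Ω)
    (hunbd : ¬ Bornology.IsBounded Ω) (θ : ℝ) (hθ : θ ∈ Set.Ioo (0:ℝ) 1)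
    (hreg : ∀ x ∈ Ω, ∀ r : ℝ, 0 < r →
      ENNReal.ofReal (θ * r ^ n) ≤ volume (Metric.ball x r ∩ Ω))
    (u : EuclideanSpace ℝ (Fin n) → ℝ) (hu : ContDiff ℝ 1 u)
    (hsupp : HasCompactSupport u) (hsub : tsupport u ⊆ Ω) (hne : u ≠ 0) :
    ∀ l : ℝ, 0 < l →
      (∫⁻ x in Ω, ∫⁻ y in Ω,
        ENNReal.ofReal ((|u x - u y| / (l * ‖x - y‖ ^ α)) ^ ((n : ℝ) / |α|)
          / ‖x - y‖ ^ (2 * n))) = ⊤ := by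
  intro l hl
  obtain ⟨hθ0, hθ1⟩ := hθ
  haveI : Nontrivial (EuclideanSpace ℝ (Fin n)) := by
    haveI : NeZero n := ⟨by omega⟩
    infer_instance
  have hα0 : α ≠ 0 := ne_of_lt hα2
  have habs : |α| = -α := abs_of_neg hα2
  have hn0 : (0:ℝ) < n := by positivity
  set p : ℝ := (n : ℝ) / |α| with hp_def
  have hp : 0 < p := by
    apply div_pos hn0
    rw [habs]; linarith
  -- volume of unit ball
  set ω : ℝ := (volume (Metric.ball (0 : EuclideanSpace ℝ (Fin n)) 1)).toReal with hω_def
  have hω0 : 0 ≤ ω := ENNReal.toReal_nonneg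
  have hball : ∀ (x : EuclideanSpace ℝ (Fin n)) (r : ℝ), 0 ≤ r →
      volume (Metric.ball x r) = ENNReal.ofReal (r ^ n * ω) := by
    intro x r hr
    rw [Measure.addHaar_ball volume x hr, finrank_euclideanSpace_fin,
      ← ENNReal.ofReal_toReal (a := volume (Metric.ball (0 : EuclideanSpace ℝ (Fin n)) 1))
        measure_ball_lt_top.ne,
      ← ENNReal.ofReal_mul (by positivity)]
  set M : ℝ := max 2 (ω / θ + 1) with hM_def
  have hM1 : (1:ℝ) < M := lt_of_lt_of_le one_lt_two (le_max_left _ _)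
  have hM0 : (0:ℝ) < M := by linarith
  have hMn : ω < θ * M ^ n := by
    have h1 : ω / θ + 1 ≤ M := le_max_right _ _
    have h2 : M ≤ M ^ n := le_self_pow₀ (by linarith) (by omega)
    have h3 : ω / θ + 1 ≤ M ^ n := le_trans h1 h2
    have h4 := (div_le_iff₀ hθ0).mp (by linarith : ω / θ ≤ M ^ n - 1)
    nlinarith
  -- key: for x ∈ Ω with u x ≠ 0, the inner integral is infinite
  have key : ∀ x ∈ Ω, u x ≠ 0 →
      (∫⁻ y in Ω, ENNReal.ofReal ((|u x - u y| / (l * ‖x - y‖ ^ α)) ^ p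
        / ‖x - y‖ ^ (2 * n))) = ⊤ := by
    intro x hxΩ hux
    obtain ⟨R0, hR0pos, hR0⟩ := hsupp.isBounded.subset_ball_lt 0 x
    set c : ℝ := |u x| with hc_def
    have hc : 0 < c := abs_pos.mpr hux
    set A : ℝ := (c / l) ^ p with hA_def
    have hA : 0 < A := Real.rpow_pos_of_pos (div_pos hc hl) p
    set s : ℕ → Set (EuclideanSpace ℝ (Fin n)) := fun k =>
      (Metric.ball x (R0 * M ^ (k + 1)) ∩ Ω) \ Metric.ball x (R0 * M ^ k) with hs_def
    have hmeas : ∀ k, MeasurableSet (s k) := fun k =>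
      (measurableSet_ball.inter hopen.measurableSet).diff measurableSet_ball
    have hsubΩ : ∀ k, s k ⊆ Ω := fun k y hy => hy.1.2
    have hMpow_mono : ∀ j k : ℕ, j ≤ k → R0 * M ^ j ≤ R0 * M ^ k := fun j k hjk =>
      mul_le_mul_of_nonneg_left (pow_le_pow_right₀ hM1.le hjk) hR0pos.le
    have hdisj : Pairwise (Function.onFun Disjoint s) := by
      intro j k hjk
      rcases lt_or_gt_of_ne hjk with h | h
      · apply Set.disjoint_left.mpr
        intro y hyj hyk
        exact hyk.2 (lt_of_lt_of_le hyj.1.1 (hMpow_mono _ _ (by omega)))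
      · apply Set.disjoint_right.mpr
        intro y hyk hyj
        exact hyj.2 (lt_of_lt_of_le hyk.1.1 (hMpow_mono _ _ (by omega)))
    -- measure lower bound
    have hμ : ∀ k : ℕ, ENNReal.ofReal (R0 ^ n * M ^ (k * n) * (θ * M ^ n - ω))
        ≤ volume (s k) := by
      intro k
      have hbig : (0:ℝ) < R0 * M ^ (k + 1) := by positivity
      have hsml : (0:ℝ) ≤ R0 * M ^ k := by positivity
      have h1 : Metric.ball x (R0 * M ^ (k + 1)) ∩ Ω ⊆ s k ∪ Metric.ball x (R0 * M ^ k) := by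
        intro y hy
        by_cases hy2 : y ∈ Metric.ball x (R0 * M ^ k)
        · exact Or.inr hy2
        · exact Or.inl ⟨hy, hy2⟩
      have h2 : ENNReal.ofReal (θ * (R0 * M ^ (k + 1)) ^ n)
          ≤ volume (s k) + ENNReal.ofReal ((R0 * M ^ k) ^ n * ω) := by
        calc ENNReal.ofReal (θ * (R0 * M ^ (k + 1)) ^ n)
            ≤ volume (Metric.ball x (R0 * M ^ (k + 1)) ∩ Ω) := hreg x hxΩ _ hbig
          _ ≤ volume (s k ∪ Metric.ball x (R0 * M ^ k)) := measure_mono h1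
          _ ≤ volume (s k) + volume (Metric.ball x (R0 * M ^ k)) := measure_union_le _ _
          _ = volume (s k) + ENNReal.ofReal ((R0 * M ^ k) ^ n * ω) := by
              rw [hball x _ hsml]
      have hexp1 : (R0 * M ^ (k + 1)) ^ n = R0 ^ n * (M ^ (k * n) * M ^ n) := by
        rw [mul_pow, ← pow_mul, ← pow_add, Nat.add_mul, one_mul]
      have hexp2 : (R0 * M ^ k) ^ n = R0 ^ n * M ^ (k * n) := by
        rw [mul_pow, ← pow_mul]
      calc ENNReal.ofReal (R0 ^ n * M ^ (k * n) * (θ * M ^ n - ω))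
          = ENNReal.ofReal (θ * (R0 * M ^ (k + 1)) ^ n - (R0 * M ^ k) ^ n * ω) := by
            congr 1; rw [hexp1, hexp2]; ring
        _ = ENNReal.ofReal (θ * (R0 * M ^ (k + 1)) ^ n)
            - ENNReal.ofReal ((R0 * M ^ k) ^ n * ω) := ENNReal.ofReal_sub _ (by positivity)
        _ ≤ volume (s k) := tsub_le_iff_right.mpr h2
    -- pointwise lower bound
    have hpt : ∀ k : ℕ, ∀ y ∈ s k,
        ENNReal.ofReal (A / (R0 * M ^ (k + 1)) ^ n)
          ≤ ENNReal.ofReal ((|u x - u y| / (l * ‖x - y‖ ^ α)) ^ p / ‖x - y‖ ^ (2 * n)) := by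
      intro k y hy
      have hy1 : dist y x < R0 * M ^ (k + 1) := hy.1.1
      have hy2 : R0 * M ^ k ≤ dist y x := not_lt.mp hy.2
      have hR0k : R0 ≤ R0 * M ^ k :=
        le_mul_of_one_le_right hR0pos.le (one_le_pow₀ hM1.le)
      set r : ℝ := ‖x - y‖ with hr_def
      have hrdist : r = dist y x := by rw [hr_def, ← dist_eq_norm, dist_comm]
      have hr0 : 0 < r := by
        rw [hrdist]
        calc (0:ℝ) < R0 * M ^ k := by positivity
          _ ≤ dist y x := hy2
      have hrlt : r < R0 * M ^ (k + 1) := by rw [hrdist]; exact hy1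
      have hrge : R0 ≤ r := by rw [hrdist]; exact le_trans hR0k hy2
      have huy : u y = 0 := by
        apply image_eq_zero_of_notMem_tsupport
        intro hmem
        have h := Metric.mem_ball.mp (hR0 hmem)
        rw [← hrdist] at h
        linarith
      have hce : |u x - u y| = c := by rw [huy, sub_zero]
      apply ENNReal.ofReal_le_ofReal
      rw [hce]
      have hkey : (c / (l * r ^ α)) ^ p = A * r ^ n := by
        have h1 : c / (l * r ^ α) = (c / l) * r ^ (-α) := by
          rw [Real.rpow_neg hr0.le]
          field_simp
        have h2 : -α * p = (n : ℝ) := by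
          rw [hp_def, habs]
          field_simp
        rw [h1, Real.mul_rpow (by positivity) (by positivity),
          ← Real.rpow_mul hr0.le, h2, Real.rpow_natCast]
      have h2n : r ^ (2 * n) = r ^ n * r ^ n := by rw [two_mul, pow_add]
      have hrn : (r : ℝ) ^ n ≠ 0 := by positivity
      have hsimp : A * r ^ n / (r ^ n * r ^ n) = A / r ^ n := by
        field_simp
      rw [hkey, h2n, hsimp]
      have hrn_le : r ^ n ≤ (R0 * M ^ (k + 1)) ^ n := pow_le_pow_left₀ hr0.le hrlt.le n
      gcongr
    -- per-annulus integral lower bound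
    set κ : ℝ := A * (θ * M ^ n - ω) / M ^ n with hκ_def
    have hκ : 0 < κ := div_pos (mul_pos hA (by linarith)) (by positivity)
    have hSk : ∀ k : ℕ, ENNReal.ofReal κ ≤ ∫⁻ y in s k,
        ENNReal.ofReal ((|u x - u y| / (l * ‖x - y‖ ^ α)) ^ p / ‖x - y‖ ^ (2 * n)) := by
      intro k
      have hden : (0:ℝ) < (R0 * M ^ (k + 1)) ^ n := by positivity
      have hexp1 : (R0 * M ^ (k + 1)) ^ n = R0 ^ n * (M ^ (k * n) * M ^ n) := by
        rw [mul_pow, ← pow_mul, ← pow_add, Nat.add_mul, one_mul]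
      calc ENNReal.ofReal κ
          = ENNReal.ofReal (A / (R0 * M ^ (k + 1)) ^ n
              * (R0 ^ n * M ^ (k * n) * (θ * M ^ n - ω))) := by
            congr 1
            rw [hκ_def, hexp1]
            have hR0n : (0:ℝ) < R0 ^ n := by positivity
            have hMkn : (0:ℝ) < M ^ (k * n) := by positivity
            have hMn' : (0:ℝ) < M ^ n := by positivity
            field_simp
        _ = ENNReal.ofReal (A / (R0 * M ^ (k + 1)) ^ n)
            * ENNReal.ofReal (R0 ^ n * M ^ (k * n) * (θ * M ^ n - ω)) :=
            ENNReal.ofReal_mul (by positivity)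
        _ ≤ ENNReal.ofReal (A / (R0 * M ^ (k + 1)) ^ n) * volume (s k) :=
            mul_le_mul_right (hμ k) _
        _ = ∫⁻ _ in s k, ENNReal.ofReal (A / (R0 * M ^ (k + 1)) ^ n) :=
            (setLIntegral_const _ _).symm
        _ ≤ _ := setLIntegral_mono' (hmeas k) (hpt k)
    rw [eq_top_iff]
    calc (⊤ : ℝ≥0∞) = ∑' _ : ℕ, ENNReal.ofReal κ :=
          (ENNReal.tsum_const_eq_top_of_ne_zero (ENNReal.ofReal_pos.mpr hκ).ne').symm
      _ ≤ ∑' k : ℕ, ∫⁻ y in s k,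
            ENNReal.ofReal ((|u x - u y| / (l * ‖x - y‖ ^ α)) ^ p / ‖x - y‖ ^ (2 * n)) :=
          ENNReal.tsum_le_tsum hSk
      _ = ∫⁻ y in ⋃ k, s k,
            ENNReal.ofReal ((|u x - u y| / (l * ‖x - y‖ ^ α)) ^ p / ‖x - y‖ ^ (2 * n)) :=
          (lintegral_iUnion hmeas hdisj _).symm
      _ ≤ _ := lintegral_mono_set (iUnion_subset hsubΩ)
  -- outer integral
  obtain ⟨x0, hx0⟩ := Function.ne_iff.mp hne
  set S : Set (EuclideanSpace ℝ (Fin n)) := Ω ∩ {z | u z ≠ 0} with hS_def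
  have hSopen : IsOpen S :=
    hopen.inter (isOpen_compl_singleton.preimage hu.continuous)
  have hSne : S.Nonempty := ⟨x0, hsub (subset_tsupport u (Function.mem_support.mpr hx0)), hx0⟩
  have hSpos : 0 < volume S := hSopen.measure_pos volume hSne
  rw [eq_top_iff]
  calc (⊤ : ℝ≥0∞) = ⊤ * volume S := (ENNReal.top_mul hSpos.ne').symm
    _ = ∫⁻ _ in S, ⊤ := (setLIntegral_const S ⊤).symm
    _ = ∫⁻ z in S, ∫⁻ y in Ω,
          ENNReal.ofReal ((|u z - u y| / (l * ‖z - y‖ ^ α)) ^ p / ‖z - y‖ ^ (2 * n)) :=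
        setLIntegral_congr_fun hSopen.measurableSet
          (fun z hz => (key z hz.1 hz.2).symm)
    _ ≤ _ := lintegral_mono_set inter_subset_left
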